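/- arXiv:2109.09974 — 2 statements merged into one kernel-verified Lean document; each statement's English description precedes it below -/
import Mathlib

section
/- For rotation matrices R, R* ∈ SO(3), define the orientation error e_R = (1/2)(R*ᵀR − RᵀR*)ᵛ ∈ ℝ³ and Ψ(R,R*) = (1/2)tr(I − R*ᵀR). If Ψ(R,R*) < α for some α with 0 < α < 2, then (1/2)‖e_R‖² ≤ Ψ(R,R*) ≤ (1/(2−α))‖e_R‖². -/
open Matrix

noncomputable def vee (A : Matrix (Fin 3) (Fin 3) ℝ) : Fin 3 → ℝ :=
  ![A 2 1, A 0 2, A 1 0]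

lemma Psi_aux (t α : ℝ) (hα0 : 0 < α) (hα2 : α < 2)
    (hΨ : 1 / 2 * (3 - t) < α) (hE : (0:ℝ) ≤ 1 / 4 * (3 + 2 * t - t ^ 2)) :
    1 / 2 * (1 / 4 * (3 + 2 * t - t ^ 2)) ≤ 1 / 2 * (3 - t) ∧
    1 / 2 * (3 - t) ≤ 1 / (2 - α) * (1 / 4 * (3 + 2 * t - t ^ 2)) := by
  have h2α : 0 < 2 - α := by linarith
  constructor
  · nlinarith [sq_nonneg (t - 3)]
  · have hrw : 1 / (2 - α) * (1 / 4 * (3 + 2 * t - t ^ 2))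
        = (1 / 4 * (3 + 2 * t - t ^ 2)) / (2 - α) := by ring
    rw [hrw, le_div_iff₀ h2α]
    nlinarith [hE, hΨ, sq_nonneg (t - 3)]

theorem Psi_eR_bounds (R Rs : Matrix (Fin 3) (Fin 3) ℝ)
    (hR : Rᵀ * R = 1) (hdetR : R.det = 1)
    (hRs : Rsᵀ * Rs = 1) (hdetRs : Rs.det = 1)
    (α : ℝ) (hα0 : 0 < α) (hα2 : α < 2)
    (hΨ : (1/2) * Matrix.trace (1 - Rsᵀ * R) < α) :
    (1/2) * (∑ i, (((1:ℝ)/2) • vee (Rsᵀ * R - Rᵀ * Rs)) i ^ 2)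
      ≤ (1/2) * Matrix.trace (1 - Rsᵀ * R) ∧
    (1/2) * Matrix.trace (1 - Rsᵀ * R)
      ≤ (1/(2 - α)) * (∑ i, (((1:ℝ)/2) • vee (Rsᵀ * R - Rᵀ * Rs)) i ^ 2) := by
  set Q : Matrix (Fin 3) (Fin 3) ℝ := Rsᵀ * R with hQ
  have hRsRst : Rs * Rsᵀ = 1 := mul_eq_one_comm.mp hRs
  have hT : Rᵀ * Rs = Qᵀ := by
    rw [hQ, transpose_mul, transpose_transpose]
  have hQtQ : Qᵀ * Q = 1 := by
    rw [hQ, transpose_mul, transpose_transpose]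
    calc Rᵀ * Rs * (Rsᵀ * R) = Rᵀ * (Rs * Rsᵀ) * R := by
          simp [Matrix.mul_assoc]
      _ = 1 := by rw [hRsRst, Matrix.mul_one, hR]
  have hdetQ : Q.det = 1 := by
    rw [hQ, Matrix.det_mul, Matrix.det_transpose, hdetRs, hdetR, one_mul]
  have hadj : adjugate Q = Qᵀ := by
    have h1 : Q * adjugate Q = 1 := by
      rw [Matrix.mul_adjugate, hdetQ, one_smul]
    calc adjugate Q = (Qᵀ * Q) * adjugate Q := by rw [hQtQ, Matrix.one_mul]
      _ = Qᵀ * (Q * adjugate Q) := by rw [Matrix.mul_assoc]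
      _ = Qᵀ := by rw [h1, Matrix.mul_one]
  -- entrywise facts
  have hcol : ∀ j : Fin 3, Q 0 j * Q 0 j + Q 1 j * Q 1 j + Q 2 j * Q 2 j = 1 := by
    intro j
    have := congrFun (congrFun hQtQ j) j
    simpa [Matrix.mul_apply, Fin.sum_univ_three, Matrix.one_apply] using this
  have hm0 : Q 1 1 * Q 2 2 - Q 1 2 * Q 2 1 = Q 0 0 := by
    have := congrFun (congrFun hadj 0) 0
    rw [adjugate_fin_three] at this
    simpa using this
  have hm1 : Q 0 0 * Q 2 2 - Q 0 2 * Q 2 0 = Q 1 1 := by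
    have := congrFun (congrFun hadj 1) 1
    rw [adjugate_fin_three] at this
    simpa using this
  have hm2 : Q 0 0 * Q 1 1 - Q 0 1 * Q 1 0 = Q 2 2 := by
    have := congrFun (congrFun hadj 2) 2
    rw [adjugate_fin_three] at this
    simpa using this
  -- rewrite trace and sum
  have htr : Matrix.trace (1 - Q) = 3 - (Q 0 0 + Q 1 1 + Q 2 2) := by
    rw [Matrix.trace_sub, Matrix.trace_one, Matrix.trace_fin_three]
    norm_num
  have hsum : (∑ i, (((1:ℝ)/2) • vee (Q - Qᵀ)) i ^ 2)
      = (1/4) * ((Q 2 1 - Q 1 2)^2 + (Q 0 2 - Q 2 0)^2 + (Q 1 0 - Q 0 1)^2) := by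
    simp [vee, Fin.sum_univ_three, Matrix.sub_apply, Matrix.transpose_apply]
    ring
  rw [hT, htr, hsum]
  have h0 := hcol 0
  have h1 := hcol 1
  have h2 := hcol 2
  set t : ℝ := Q 0 0 + Q 1 1 + Q 2 2 with ht
  have key : (1/4) * ((Q 2 1 - Q 1 2)^2 + (Q 0 2 - Q 2 0)^2 + (Q 1 0 - Q 0 1)^2)
      = (1/4) * (3 + 2*t - t^2) := by
    rw [ht]; linear_combination (1/4) * h0 + (1/4) * h1 + (1/4) * h2 + (1/2) * hm0 + (1/2) * hm1 + (1/2) * hm2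
  rw [key]
  rw [htr] at hΨ
  have hE : (0:ℝ) ≤ 1 / 4 * (3 + 2 * t - t ^ 2) := by
    rw [← key]; positivity
  exact Psi_aux t α hα0 hα2 hΨ hE
end

section
/- For rotation matrices R, R* ∈ SO(3), the matrix E(R,R*) = (1/2)(tr(RᵀR*)·I − RᵀR*) has operator norm at most 1. -/
open Matrix

private lemma dp_sym (M : Matrix (Fin 3) (Fin 3) ℝ) (y z : Fin 3 → ℝ) :
    (M *ᵥ y) ⬝ᵥ z = y ⬝ᵥ (Mᵀ *ᵥ z) := by
  rw [dotProduct_comm, dotProduct_mulVec, dotProduct_comm, mulVec_transpose]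

set_option maxHeartbeats 2000000 in
private lemma so3_key (Q : Matrix (Fin 3) (Fin 3) ℝ) (h1 : Qᵀ * Q = 1) (hdet : Q.det = 1) :
    ∀ x : Fin 3 → ℝ,
      Real.sqrt (∑ i, ((((1:ℝ)/2) • (Matrix.trace Q • (1 : Matrix (Fin 3) (Fin 3) ℝ) - Q)) *ᵥ x) i ^ 2)
        ≤ Real.sqrt (∑ i, x i ^ 2) := by
  have h1' : Q * Qᵀ = 1 := mul_eq_one_comm.mp h1
  -- Cayley–Hamilton style identity
  have hCH : Qᵀ = Q * Q - trace Q • Q + trace Q • 1 := by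
    have hadj : adjugate Q = Qᵀ := by
      calc adjugate Q = (Qᵀ * Q) * adjugate Q := by rw [h1, one_mul]
      _ = Qᵀ * (Q * adjugate Q) := by rw [mul_assoc]
      _ = Qᵀ := by rw [Matrix.mul_adjugate, hdet, one_smul, mul_one]
    rw [adjugate_fin_three] at hadj
    have e00 : Q 1 1 * Q 2 2 - Q 1 2 * Q 2 1 = Q 0 0 := by
      simpa using congrFun (congrFun hadj 0) 0
    have e01 : -(Q 0 1 * Q 2 2) + Q 0 2 * Q 2 1 = Q 1 0 := by
      simpa using congrFun (congrFun hadj 0) 1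
    have e02 : Q 0 1 * Q 1 2 - Q 0 2 * Q 1 1 = Q 2 0 := by
      simpa using congrFun (congrFun hadj 0) 2
    have e10 : -(Q 1 0 * Q 2 2) + Q 1 2 * Q 2 0 = Q 0 1 := by
      simpa using congrFun (congrFun hadj 1) 0
    have e11 : Q 0 0 * Q 2 2 - Q 0 2 * Q 2 0 = Q 1 1 := by
      simpa using congrFun (congrFun hadj 1) 1
    have e12 : -(Q 0 0 * Q 1 2) + Q 0 2 * Q 1 0 = Q 2 1 := by
      simpa using congrFun (congrFun hadj 1) 2
    have e20 : Q 1 0 * Q 2 1 - Q 1 1 * Q 2 0 = Q 0 2 := by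
      simpa using congrFun (congrFun hadj 2) 0
    have e21 : -(Q 0 0 * Q 2 1) + Q 0 1 * Q 2 0 = Q 1 2 := by
      simpa using congrFun (congrFun hadj 2) 1
    have e22 : Q 0 0 * Q 1 1 - Q 0 1 * Q 1 0 = Q 2 2 := by
      simpa using congrFun (congrFun hadj 2) 2
    have htr : trace Q = Q 0 0 + Q 1 1 + Q 2 2 := by
      simp [Matrix.trace, Fin.sum_univ_three]
    ext i j
    simp only [transpose_apply, Matrix.add_apply, Matrix.sub_apply, Matrix.smul_apply,
      Matrix.mul_apply, Fin.sum_univ_three, Matrix.one_apply, smul_eq_mul, htr]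
    fin_cases i <;> fin_cases j <;> simp
    · linear_combination e11 + e22
    · linear_combination -e01
    · linear_combination -e02
    · linear_combination -e10
    · linear_combination e00 + e22
    · linear_combination -e12
    · linear_combination -e20
    · linear_combination -e21
    · linear_combination e00 + e11
  set t := trace Q with htdef
  clear_value t
  -- t ≤ 3
  have htr3 : t = Q 0 0 + Q 1 1 + Q 2 2 := by
    simp [htdef, Matrix.trace, Fin.sum_univ_three]
  have c0 : Q 0 0 ^ 2 + Q 1 0 ^ 2 + Q 2 0 ^ 2 = 1 := by
    have := congrFun (congrFun h1 0) 0
    simpa [Matrix.mul_apply, Fin.sum_univ_three, Matrix.one_apply, sq] using this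
  have c1 : Q 0 1 ^ 2 + Q 1 1 ^ 2 + Q 2 1 ^ 2 = 1 := by
    have := congrFun (congrFun h1 1) 1
    simpa [Matrix.mul_apply, Fin.sum_univ_three, Matrix.one_apply, sq] using this
  have c2 : Q 0 2 ^ 2 + Q 1 2 ^ 2 + Q 2 2 ^ 2 = 1 := by
    have := congrFun (congrFun h1 2) 2
    simpa [Matrix.mul_apply, Fin.sum_univ_three, Matrix.one_apply, sq] using this
  have ht3 : t ≤ 3 := by
    rw [htr3]
    nlinarith [sq_nonneg (Q 0 0 - 1), sq_nonneg (Q 1 1 - 1), sq_nonneg (Q 2 2 - 1),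
      sq_nonneg (Q 1 0), sq_nonneg (Q 2 0), sq_nonneg (Q 0 1), sq_nonneg (Q 2 1),
      sq_nonneg (Q 0 2), sq_nonneg (Q 1 2), c0, c1, c2]
  -- t ≥ -1
  have hdQ : (Q - 1).det = 0 := by
    have h2 : (Q - 1)ᵀ = -(Qᵀ * (Q - 1)) := by
      rw [mul_sub, h1, mul_one, transpose_sub, transpose_one, neg_sub]
    have h3 : (Q - 1).det = -(Q - 1).det := by
      conv_lhs => rw [← det_transpose, h2]
      rw [det_neg, det_mul, det_transpose, hdet]
      norm_num [Fintype.card_fin]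
    linarith
  obtain ⟨v, hv0, hv⟩ := Matrix.exists_mulVec_eq_zero_iff.mpr hdQ
  have hQv : Q *ᵥ v = v := by
    have h := hv
    rw [sub_mulVec, one_mulVec, sub_eq_zero] at h
    exact h
  have hQtv : Qᵀ *ᵥ v = v := by
    calc Qᵀ *ᵥ v = Qᵀ *ᵥ (Q *ᵥ v) := by rw [hQv]
    _ = (Qᵀ * Q) *ᵥ v := by rw [mulVec_mulVec]
    _ = v := by rw [h1, one_mulVec]
  have hQv' : ∀ i, Q i 0 * v 0 + Q i 1 * v 1 + Q i 2 * v 2 = v i := by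
    intro i
    have := congrFun hQv i
    simpa [Matrix.mulVec, dotProduct, Fin.sum_univ_three] using this
  have hQtv' : ∀ j, Q 0 j * v 0 + Q 1 j * v 1 + Q 2 j * v 2 = v j := by
    intro j
    have := congrFun hQtv j
    simpa [Matrix.mulVec, dotProduct, Fin.sum_univ_three, Matrix.transpose_apply] using this
  set c := v ⬝ᵥ v with hcdef
  clear_value c
  have hc : 0 < c := by
    rw [hcdef]
    rcases (Finset.sum_nonneg fun i _ => mul_self_nonneg (v i) :
        (0:ℝ) ≤ v ⬝ᵥ v).lt_or_eq with h | h
    · exact h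
    · exact absurd (dotProduct_self_eq_zero.mp h.symm) hv0
  set V := vecMulVec v v with hVdef
  clear_value V
  have hVt : Vᵀ = V := by
    ext i j
    simp [hVdef, vecMulVec_apply, mul_comm]
  have hQV : Q * V = V := by
    ext i j
    simp only [hVdef, Matrix.mul_apply, vecMulVec_apply, Fin.sum_univ_three]
    linear_combination v j * hQv' i
  have hQtV : Qᵀ * V = V := by
    ext i j
    simp only [hVdef, Matrix.mul_apply, vecMulVec_apply, Fin.sum_univ_three, transpose_apply]
    linear_combination v j * hQtv' i
  have hVQ : V * Q = V := by
    ext i j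
    simp only [hVdef, Matrix.mul_apply, vecMulVec_apply, Fin.sum_univ_three]
    linear_combination v i * hQtv' j
  have hVV : V * V = c • V := by
    ext i j
    simp only [hVdef, hcdef, Matrix.mul_apply, vecMulVec_apply, Fin.sum_univ_three,
      Matrix.smul_apply, dotProduct, smul_eq_mul]
    ring
  set B := c • ((1 : Matrix (Fin 3) (Fin 3) ℝ) + Q) - (2:ℝ) • V with hBdef
  clear_value B
  have hBB : Bᵀ * B = (2*c^2) • (1 : Matrix (Fin 3) (Fin 3) ℝ) + (c^2) • Q + (c^2) • Qᵀ
      - (4*c) • V := by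
    rw [hBdef, transpose_sub, transpose_smul, transpose_smul, transpose_add, transpose_one, hVt]
    simp only [sub_mul, mul_sub, add_mul, mul_add, smul_mul_assoc, mul_smul_comm,
      one_mul, mul_one, h1, hQtV, hVQ, hVV, hQV]
    module
  have htrV : trace V = c := by
    simp [hVdef, hcdef, Matrix.trace, Matrix.diag, vecMulVec_apply, dotProduct]
  have htrB : trace (Bᵀ * B) = 2*c^2 + 2*c^2*t := by
    rw [hBB]
    simp [trace_add, trace_sub, trace_smul, trace_one, trace_transpose, htrV, ← htdef]
    ring
  have htrpos : 0 ≤ trace (Bᵀ * B) := by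
    rw [Matrix.trace]
    refine Finset.sum_nonneg fun i _ => ?_
    simp only [Matrix.diag_apply, Matrix.mul_apply, Matrix.transpose_apply]
    exact Finset.sum_nonneg fun j _ => mul_self_nonneg _
  have ht1 : -1 ≤ t := by nlinarith [htrB ▸ htrpos, mul_pos hc hc]
  -- S² identity
  have hQ2 : Q * Q = Qᵀ + t • Q - t • 1 := by rw [hCH]; module
  have hQt2 : Qᵀ * Qᵀ = Q + t • Qᵀ - t • 1 := by
    have h := congrArg transpose hCH
    rw [transpose_add, transpose_sub, transpose_smul, transpose_smul, transpose_mul,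
      transpose_transpose, transpose_one] at h
    calc Qᵀ * Qᵀ = (Qᵀ * Qᵀ - t • Qᵀ + t • 1) + t • Qᵀ - t • 1 := by module
    _ = Q + t • Qᵀ - t • 1 := by rw [← h]
  have hS2 : (Q + Qᵀ) * (Q + Qᵀ)
      = (t + 1) • (Q + Qᵀ) + (2 - 2*t) • (1 : Matrix (Fin 3) (Fin 3) ℝ) := by
    rw [add_mul, mul_add, mul_add, h1, h1', hQ2, hQt2]
    module
  -- final inequality
  intro x
  apply Real.sqrt_le_sqrt
  have hconv : ∀ w : Fin 3 → ℝ, ∑ i, w i ^ 2 = w ⬝ᵥ w := by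
    intro w; simp [dotProduct, sq]
  rw [hconv, hconv]
  set a : ℝ := x ⬝ᵥ x with hadef
  clear_value a
  set q : ℝ := x ⬝ᵥ (Q *ᵥ x) with hqdef
  clear_value q
  have fQt : x ⬝ᵥ (Qᵀ *ᵥ x) = q := by rw [← dp_sym, dotProduct_comm, hqdef]
  have fQQ : (Q *ᵥ x) ⬝ᵥ (Q *ᵥ x) = a := by
    rw [dp_sym, mulVec_mulVec, h1, one_mulVec, hadef]
  have hup : 0 ≤ 2*a - 2*q := by
    have hnn : 0 ≤ (x - Q *ᵥ x) ⬝ᵥ (x - Q *ᵥ x) :=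
      Finset.sum_nonneg fun i _ => mul_self_nonneg _
    have hexp : (x - Q *ᵥ x) ⬝ᵥ (x - Q *ᵥ x) = 2*a - 2*q := by
      rw [sub_dotProduct, dotProduct_sub, dotProduct_sub, fQQ,
        dotProduct_comm (Q *ᵥ x) x]
      rw [← hadef, ← hqdef]; ring
    linarith [hexp ▸ hnn]
  have hSx : x ⬝ᵥ ((Q + Qᵀ) *ᵥ x) = 2*q := by
    rw [add_mulVec, dotProduct_add, fQt, ← hqdef]; ring
  have hlow : 0 ≤ 2*q - (t-1)*a := by
    set y := (Q + Qᵀ) *ᵥ x - (t - 1) • x with hydef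
    clear_value y
    have hStr : (Q + Qᵀ)ᵀ = Q + Qᵀ := by
      rw [transpose_add, transpose_transpose, add_comm]
    have hSS : ((Q + Qᵀ) *ᵥ x) ⬝ᵥ ((Q + Qᵀ) *ᵥ x) = (t+1)*(2*q) + (2-2*t)*a := by
      rw [dp_sym, hStr, mulVec_mulVec, hS2, add_mulVec, smul_mulVec, smul_mulVec,
        one_mulVec, dotProduct_add, dotProduct_smul, dotProduct_smul, hSx, ← hadef,
        smul_eq_mul, smul_eq_mul]
    have hSxx : ((Q + Qᵀ) *ᵥ x) ⬝ᵥ x = 2*q := by rw [dotProduct_comm, hSx]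
    have hyy : y ⬝ᵥ y = (3 - t) * (2*q - (t-1)*a) := by
      rw [hydef]
      simp only [sub_dotProduct, dotProduct_sub, dotProduct_smul, smul_dotProduct,
        smul_eq_mul, hSS, hSxx, hSx, ← hadef]
      ring
    have hy0 : 0 ≤ y ⬝ᵥ y := Finset.sum_nonneg fun i _ => mul_self_nonneg _
    rcases lt_or_eq_of_le ht3 with h | h
    · nlinarith [hy0, hyy, h]
    · have hz : y ⬝ᵥ y = 0 := by rw [hyy, ← h]; ring
      have hy : y = 0 := dotProduct_self_eq_zero.mp hz
      have hxy : x ⬝ᵥ y = 2*q - (t-1)*a := by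
        rw [hydef, dotProduct_sub, hSx, dotProduct_smul, smul_eq_mul, ← hadef]
      rw [hy, dotProduct_zero] at hxy
      linarith
  have hw : (((1:ℝ)/2) • (t • (1 : Matrix (Fin 3) (Fin 3) ℝ) - Q)) *ᵥ x
      = ((1:ℝ)/2) • (t • x - Q *ᵥ x) := by
    rw [smul_mulVec, sub_mulVec, smul_mulVec, one_mulVec]
  rw [hw, smul_dotProduct, dotProduct_smul, smul_eq_mul, smul_eq_mul]
  have hzz : (t • x - Q *ᵥ x) ⬝ᵥ (t • x - Q *ᵥ x) = t^2*a - 2*t*q + a := by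
    simp only [sub_dotProduct, dotProduct_sub, dotProduct_smul, smul_dotProduct,
      smul_eq_mul, fQQ, dotProduct_comm (Q *ᵥ x) x, ← hadef, ← hqdef]
    ring
  rw [hzz]
  have hm : 0 ≤ (t+1) * (2*q - (t-1)*a) := mul_nonneg (by linarith) hlow
  nlinarith [hm, hup]

theorem E_opNorm_le_one (R Rs : Matrix (Fin 3) (Fin 3) ℝ)
    (hR : Rᵀ * R = 1) (hdetR : R.det = 1)
    (hRs : Rsᵀ * Rs = 1) (hdetRs : Rs.det = 1) :
    ∀ x : Fin 3 → ℝ,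
      Real.sqrt (∑ i, ((((1:ℝ)/2) • (Matrix.trace (Rᵀ * Rs) • (1 : Matrix (Fin 3) (Fin 3) ℝ) - Rᵀ * Rs)) *ᵥ x) i ^ 2)
        ≤ Real.sqrt (∑ i, x i ^ 2) := by
  have hRRt : R * Rᵀ = 1 := mul_eq_one_comm.mp hR
  have h1 : (Rᵀ * Rs)ᵀ * (Rᵀ * Rs) = 1 := by
    rw [transpose_mul, transpose_transpose, mul_assoc, ← mul_assoc R Rᵀ Rs, hRRt, one_mul, hRs]
  have hdet : (Rᵀ * Rs).det = 1 := by
    rw [det_mul, det_transpose, hdetR, hdetRs, one_mul]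
  exact so3_key (Rᵀ * Rs) h1 hdet
end
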